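/- Let G be a graph with n vertices and e edges such that the edge chromatic number χ'(G) is at most ℓ, and let H be the edgeless graph on ℓ vertices. Then the join G * H admits a clique partition of size exactly nℓ − e. -/

import Mathlib

/-- The join of a graph `G` on `Fin n` with the edgeless graph on `Fin ℓ`. -/
def joinEdgeless {n ℓ : ℕ} (G : SimpleGraph (Fin n)) : SimpleGraph (Fin n ⊕ Fin ℓ) where
  Adj u v :=
    match u, v with
    | Sum.inl a, Sum.inl b => G.Adj a b
    | Sum.inl _, Sum.inr _ => True
    | Sum.inr _, Sum.inl _ => True
    | Sum.inr _, Sum.inr _ => False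
  symm := ⟨by
    rintro (a | a) (b | b) h <;> simp_all <;> exact h.symm⟩
  loopless := ⟨by
    rintro (a | a) h <;> simp_all⟩

/-- `P` is a clique partition of `G`. -/
def IsCliquePartition {V : Type*} (G : SimpleGraph V) (P : Finset (Finset V)) : Prop :=
  (∀ s ∈ P, G.IsClique (s : Set V) ∧ 2 ≤ s.card) ∧
    ∀ u v : V, G.Adj u v → ∃! s, s ∈ P ∧ u ∈ s ∧ v ∈ s

/-- `G` has a proper edge coloring with `ℓ` colors, i.e. `χ'(G) ≤ ℓ`. -/
def HasProperEdgeColoring {n : ℕ} (G : SimpleGraph (Fin n)) (ℓ : ℕ) : Prop :=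
  ∃ c : Sym2 (Fin n) → Fin ℓ,
    ∀ e₁ ∈ G.edgeSet, ∀ e₂ ∈ G.edgeSet,
      e₁ ≠ e₂ → (∃ v, v ∈ e₁ ∧ v ∈ e₂) → c e₁ ≠ c e₂


section Aux
variable {n ℓ : ℕ} (G : SimpleGraph (Fin n)) [DecidableRel G.Adj] (c : Sym2 (Fin n) → Fin ℓ)

/-- Triangle associated to an edge. -/
def triCP (e : Sym2 (Fin n)) : Finset (Fin n ⊕ Fin ℓ) :=
  insert (Sum.inr (c e)) ((Finset.univ.filter (· ∈ e)).image Sum.inl)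

lemma mem_triCP {z : Fin n ⊕ Fin ℓ} {e : Sym2 (Fin n)} :
    z ∈ triCP c e ↔ z = Sum.inr (c e) ∨ ∃ w ∈ e, z = Sum.inl w := by
  simp [triCP, eq_comm]

/-- Pair clique for an uncovered pair. -/
def pairCP (p : Fin n × Fin ℓ) : Finset (Fin n ⊕ Fin ℓ) :=
  {Sum.inl p.1, Sum.inr p.2}

def coveredCP (p : Fin n × Fin ℓ) : Prop :=
  ∃ y, G.Adj p.1 y ∧ c s(p.1, y) = p.2

instance : DecidablePred (coveredCP G c) := fun _ => by
  unfold coveredCP; infer_instance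

lemma triCP_pair {x y : Fin n} (h : x ≠ y) :
    triCP c s(x, y) = {Sum.inr (c s(x, y)), Sum.inl x, Sum.inl y} := by
  have : (Finset.univ.filter (· ∈ s(x, y))) = {x, y} := by
    ext a; simp [Sym2.mem_iff]
  rw [triCP, this]
  ext z; simp [or_comm, or_assoc, or_left_comm]

lemma triCP_card {x y : Fin n} (h : x ≠ y) : (triCP c s(x, y)).card = 3 := by
  rw [triCP_pair c h]
  rw [Finset.card_insert_of_notMem (by simp), Finset.card_insert_of_notMem (by simp [h])]
  simp

lemma pairCP_card (p : Fin n × Fin ℓ) : (pairCP (ℓ := ℓ) p).card = 2 := by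
  simp [pairCP]

end Aux


/-- if `χ'(G) ≤ ℓ`, then the join `G * \overline{K_ℓ}` admits a clique
partition of size exactly `nℓ − e`. -/
theorem cliquePartition_join_of_edgeColoring (n ℓ : ℕ) (hℓ : 0 < ℓ)
    (G : SimpleGraph (Fin n)) [DecidableRel G.Adj]
    (hχ : HasProperEdgeColoring G ℓ) :
    ∃ P : Finset (Finset (Fin n ⊕ Fin ℓ)),
      IsCliquePartition (joinEdgeless (ℓ := ℓ) G) P ∧
        P.card + G.edgeFinset.card = n * ℓ := by
  classical
  obtain ⟨c, hc⟩ := hχ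
  -- colors of two distinct edges sharing a vertex differ; contrapositive:
  have hcol : ∀ a y z : Fin n, G.Adj a y → G.Adj a z → c s(a, y) = c s(a, z) → y = z := by
    intro a y z hy hz hcc
    by_contra hne
    have hne' : s(a, y) ≠ s(a, z) := fun h => hne (Sym2.congr_right.1 h)
    exact hc _ (G.mem_edgeSet.2 hy) _ (G.mem_edgeSet.2 hz) hne'
      ⟨a, by simp, by simp⟩ hcc
  set T : Finset (Finset (Fin n ⊕ Fin ℓ)) := G.edgeFinset.image (triCP c) with hT
  set S : Finset (Finset (Fin n ⊕ Fin ℓ)) :=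
    (Finset.univ.filter fun p => ¬ coveredCP G c p).image pairCP with hS
  have hmemT : ∀ s ∈ T, ∃ x y : Fin n, G.Adj x y ∧ s = triCP c s(x, y) := by
    intro s hs
    obtain ⟨e, he, rfl⟩ := Finset.mem_image.1 hs
    rw [SimpleGraph.mem_edgeFinset] at he
    induction e using Sym2.ind with
    | _ x y => exact ⟨x, y, G.mem_edgeSet.1 he, rfl⟩
  have hmemS : ∀ s ∈ S, ∃ p : Fin n × Fin ℓ, ¬ coveredCP G c p ∧ s = pairCP p := by
    intro s hs
    obtain ⟨p, hp, rfl⟩ := Finset.mem_image.1 hs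
    exact ⟨p, (Finset.mem_filter.1 hp).2, rfl⟩
  refine ⟨T ∪ S, ⟨?_, ?_⟩, ?_⟩
  · -- every member is a clique of size ≥ 2
    intro s hs
    rcases Finset.mem_union.1 hs with h | h
    · obtain ⟨x, y, hxy, rfl⟩ := hmemT _ h
      constructor
      · intro a ha b hb hab
        rw [Finset.mem_coe, mem_triCP] at ha hb
        rcases ha with rfl | ⟨w, hw, rfl⟩ <;> rcases hb with rfl | ⟨w', hw', rfl⟩
        · exact (hab rfl).elim
        · trivial
        · trivial
        · rw [Sym2.mem_iff] at hw hw'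
          have hww' : w ≠ w' := fun h => hab (by rw [h])
          show G.Adj w w'
          rcases hw with rfl | rfl <;> rcases hw' with rfl | rfl <;>
            first | exact (hww' rfl).elim | exact hxy | exact hxy.symm
      · rw [triCP_card c hxy.ne]; omega
    · obtain ⟨p, hp, rfl⟩ := hmemS _ h
      constructor
      · intro a ha b hb hab
        rw [Finset.mem_coe] at ha hb
        simp only [pairCP, Finset.mem_insert, Finset.mem_singleton] at ha hb
        rcases ha with rfl | rfl <;> rcases hb with rfl | rfl <;>
          first | exact (hab rfl).elim | trivial
      · rw [pairCP_card]
  · -- uniqueness of covering clique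
    have key : ∀ (a : Fin n) (v : Fin ℓ),
        ∃! s, (s ∈ T ∪ S) ∧ Sum.inl a ∈ s ∧ Sum.inr v ∈ s := by
      intro a v
      by_cases hcov : coveredCP G c (a, v)
      · obtain ⟨y, hy, hcy⟩ := hcov
        replace hy : G.Adj a y := hy
        replace hcy : c s(a, y) = v := hcy
        refine ⟨triCP c s(a, y), ⟨Finset.mem_union_left _ (Finset.mem_image_of_mem _
          (SimpleGraph.mem_edgeFinset.2 (G.mem_edgeSet.2 hy))), ?_, ?_⟩, ?_⟩
        · exact (mem_triCP c).2 (Or.inr ⟨a, by simp, rfl⟩)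
        · exact (mem_triCP c).2 (Or.inl (by rw [hcy]))
        · rintro s ⟨hsP, hsa, hsv⟩
          rcases Finset.mem_union.1 hsP with h | h
          · obtain ⟨x', y', hxy', rfl⟩ := hmemT _ h
            rcases (mem_triCP c).1 hsa with h1 | ⟨w, hw, hw2⟩
            · exact absurd h1 (by simp)
            · have hwa : a = w := by injection hw2
              subst hwa
              rcases (mem_triCP c).1 hsv with h2 | ⟨w', hw', hw2'⟩
              · have hv : v = c s(x', y') := by injection h2
                subst hv
                rw [Sym2.mem_iff] at hw
                rcases hw with rfl | rfl
                · rw [hcol a y' y hxy' hy hcy.symm]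
                · rw [hcol a x' y hxy'.symm hy (by rw [Sym2.eq_swap]; exact hcy.symm),
                    Sym2.eq_swap]
              · exact absurd hw2' (by simp)
          · obtain ⟨p, hp, rfl⟩ := hmemS _ h
            simp only [pairCP, Finset.mem_insert, Finset.mem_singleton] at hsa hsv
            rcases hsa with h1 | h1
            · obtain rfl : a = p.1 := by injection h1
              rcases hsv with h2 | h2
              · exact absurd h2 (by simp)
              · obtain rfl : v = p.2 := by injection h2
                exact absurd ⟨y, hy, hcy⟩ hp
            · exact absurd h1 (by simp)
      · refine ⟨pairCP (a, v), ⟨Finset.mem_union_right _ (Finset.mem_image_of_mem _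
          (Finset.mem_filter.2 ⟨Finset.mem_univ _, hcov⟩)), by simp [pairCP], by simp [pairCP]⟩, ?_⟩
        rintro s ⟨hsP, hsa, hsv⟩
        rcases Finset.mem_union.1 hsP with h | h
        · obtain ⟨x', y', hxy', rfl⟩ := hmemT _ h
          rcases (mem_triCP c).1 hsa with h1 | ⟨w, hw, hw2⟩
          · exact absurd h1 (by simp)
          · have hwa : a = w := by injection hw2
            subst hwa
            rcases (mem_triCP c).1 hsv with h2 | ⟨w', hw', hw2'⟩
            · have hv : v = c s(x', y') := by injection h2
              subst hv
              rw [Sym2.mem_iff] at hw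
              exfalso; apply hcov
              rcases hw with rfl | rfl
              · exact ⟨y', hxy', rfl⟩
              · exact ⟨x', hxy'.symm, by rw [Sym2.eq_swap]⟩
            · exact absurd hw2' (by simp)
        · obtain ⟨p, hp, rfl⟩ := hmemS _ h
          simp only [pairCP, Finset.mem_insert, Finset.mem_singleton] at hsa hsv
          rcases hsa with h1 | h1
          · rcases hsv with h2 | h2
            · exact absurd h2 (by simp)
            · obtain rfl : a = p.1 := by injection h1
              obtain rfl : v = p.2 := by injection h2
              rfl
          · exact absurd h1 (by simp)
    rintro (a | a) (b | b) hadj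
    · -- inl a, inl b
      have hab : G.Adj a b := hadj
      refine ⟨triCP c s(a, b), ⟨Finset.mem_union_left _ (Finset.mem_image_of_mem _
        (SimpleGraph.mem_edgeFinset.2 (G.mem_edgeSet.2 hab))),
        (mem_triCP c).2 (Or.inr ⟨a, by simp, rfl⟩), (mem_triCP c).2 (Or.inr ⟨b, by simp, rfl⟩)⟩, ?_⟩
      rintro s ⟨hsP, hsa, hsb⟩
      rcases Finset.mem_union.1 hsP with h | h
      · obtain ⟨x', y', hxy', rfl⟩ := hmemT _ h
        have ha' : a ∈ s(x', y') := by
          rcases (mem_triCP c).1 hsa with h1 | ⟨w, hw, hw2⟩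
          · exact absurd h1 (by simp)
          · have hwa : a = w := by injection hw2
            subst hwa
            exact hw
        have hb' : b ∈ s(x', y') := by
          rcases (mem_triCP c).1 hsb with h1 | ⟨w, hw, hw2⟩
          · exact absurd h1 (by simp)
          · have hwb : b = w := by injection hw2
            subst hwb
            exact hw
        rw [(Sym2.mem_and_mem_iff hab.ne).1 ⟨ha', hb'⟩]
      · obtain ⟨p, hp, rfl⟩ := hmemS _ h
        simp only [pairCP, Finset.mem_insert, Finset.mem_singleton] at hsa hsb
        rcases hsa with h1 | h1
        · rcases hsb with h2 | h2
          · exfalso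
            have e1 : a = p.1 := by injection h1
            have e2 : b = p.1 := by injection h2
            exact hab.ne (e1.trans e2.symm)
          · exact absurd h2 (by simp)
        · exact absurd h1 (by simp)
    · exact key a b
    · obtain ⟨s, ⟨h1, h2, h3⟩, hu⟩ := key b a
      exact ⟨s, ⟨h1, h3, h2⟩, fun t ⟨k1, k2, k3⟩ => hu t ⟨k1, k3, k2⟩⟩
    · exact absurd hadj (by simp [joinEdgeless])
  · -- the count
    have hTS : Disjoint T S := by
      rw [Finset.disjoint_left]
      intro s hsT hsS
      obtain ⟨x, y, hxy, rfl⟩ := hmemT _ hsT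
      obtain ⟨p, hp, heq⟩ := hmemS _ hsS
      have h3 := triCP_card c hxy.ne
      rw [heq, pairCP_card] at h3
      omega
    have hTcard : T.card = G.edgeFinset.card := by
      rw [hT]
      apply Finset.card_image_of_injOn
      intro e he e' he' heq
      rw [Finset.mem_coe, SimpleGraph.mem_edgeFinset] at he he'
      induction e using Sym2.ind with
      | _ x y =>
        have hxy : G.Adj x y := G.mem_edgeSet.1 he
        have hx : x ∈ e' := by
          have := (mem_triCP c).1 (heq ▸ (mem_triCP c).2 (Or.inr ⟨x, by simp, rfl⟩))
          rcases this with h1 | ⟨w, hw, hw2⟩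
          · exact absurd h1 (by simp)
          · have hwx : x = w := by injection hw2
            subst hwx
            exact hw
        have hy : y ∈ e' := by
          have := (mem_triCP c).1 (heq ▸ (mem_triCP c).2 (Or.inr ⟨y, by simp, rfl⟩))
          rcases this with h1 | ⟨w, hw, hw2⟩
          · exact absurd h1 (by simp)
          · have hwy : y = w := by injection hw2
            subst hwy
            exact hw
        exact ((Sym2.mem_and_mem_iff hxy.ne).1 ⟨hx, hy⟩).symm
    have hA : (Finset.univ.filter fun p => coveredCP G c p).card = 2 * G.edgeFinset.card := by
      rw [← SimpleGraph.dart_card_eq_twice_card_edges, ← Finset.card_univ]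
      symm
      apply Finset.card_bij (fun (d : G.Dart) _ => (d.fst, c d.edge))
      · intro d _
        refine Finset.mem_filter.2 ⟨Finset.mem_univ _, d.snd, d.adj, ?_⟩
        rfl
      · intro d1 _ d2 _ heq
        have h1 : d1.fst = d2.fst := (Prod.ext_iff.1 heq).1
        have h2 : c d1.edge = c d2.edge := (Prod.ext_iff.1 heq).2
        have hE : d1.edge = d2.edge := by
          by_contra hne
          exact hc _ (SimpleGraph.Dart.edge_mem d1) _ (SimpleGraph.Dart.edge_mem d2) hne
            ⟨d1.fst, by rw [show d1.edge = s(d1.fst, d1.snd) from rfl]; exact Sym2.mem_mk_left _ _,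
              by rw [h1, show d2.edge = s(d2.fst, d2.snd) from rfl]; exact Sym2.mem_mk_left _ _⟩ h2
        have h3 : d1.snd = d2.snd := by
          have : s(d1.fst, d1.snd) = s(d2.fst, d2.snd) := hE
          rw [h1] at this
          exact Sym2.congr_right.1 this
        ext <;> simp [h1, h3]
      · intro p hp
        obtain ⟨-, y, hy, hcy⟩ := Finset.mem_filter.1 hp
        exact ⟨SimpleGraph.Dart.mk (p.1, y) hy, Finset.mem_univ _, by simp [SimpleGraph.Dart.edge, hcy]⟩
    have hScard : S.card = n * ℓ - 2 * G.edgeFinset.card := by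
      rw [hS]
      rw [Finset.card_image_of_injOn]
      · have hsplit := Finset.card_filter_add_card_filter_not
          (s := (Finset.univ : Finset (Fin n × Fin ℓ))) (p := fun p => coveredCP G c p)
        rw [hA] at hsplit
        have huniv : (Finset.univ : Finset (Fin n × Fin ℓ)).card = n * ℓ := by simp
        omega
      · intro p _ q _ heq
        have h1 : Sum.inl p.1 ∈ pairCP (ℓ := ℓ) q := by rw [← heq]; simp [pairCP]
        have h2 : Sum.inr p.2 ∈ pairCP q := by rw [← heq]; simp [pairCP]
        simp only [pairCP, Finset.mem_insert, Finset.mem_singleton] at h1 h2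
        rcases h1 with h1 | h1
        · rcases h2 with h2 | h2
          · exact absurd h2 (by simp)
          · have e1 : p.1 = q.1 := by injection h1
            have e2 : p.2 = q.2 := by injection h2
            exact Prod.ext e1 e2
        · exact absurd h1 (by simp)
    have hm : 2 * G.edgeFinset.card ≤ n * ℓ := by
      have := Finset.card_filter_le (Finset.univ : Finset (Fin n × Fin ℓ))
        (fun p => coveredCP G c p)
      rw [hA] at this
      simpa using this
    rw [Finset.card_union_of_disjoint hTS, hTcard, hScard]
    omega
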